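/- arXiv:1305.5384 — 4 statements merged into one kernel-verified Lean document; each statement's English description precedes it below -/
import Mathlib

section
/- Let c₁, c₂, c₃ ∈ [-1,1] be the correlators ⟨0⟩₁, ⟨0⟩₂, ⟨1⟩₃ of a tripartite no-signalling probability distribution maximally violating the three-party Mermin inequality (i.e., with ⟨001⟩ = ⟨010⟩ = ⟨100⟩ = 1 and ⟨111⟩ = -1). Then c₁ + c₂ + c₃ ≤ 1. -/
/-- Outcomes `±1` are encoded by `Bool`: `true ↦ -1`, `false ↦ +1`;
inputs `{0,1}` are encoded by `Bool`: `false ↦ 0`, `true ↦ 1`. -/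
noncomputable def sgn (b : Bool) : ℝ := if b then -1 else 1

/-- The correlator of `P` over the set of parties `S`. -/
noncomputable def corr {N : ℕ} (P : (Fin N → Bool) → ℝ) (S : Finset (Fin N)) : ℝ :=
  ∑ a : Fin N → Bool, P a * ∏ i ∈ S, sgn (a i)

/-- A probability distribution on outcome strings. -/
def IsProb {N : ℕ} (P : (Fin N → Bool) → ℝ) : Prop :=
  (∀ a, 0 ≤ P a) ∧ ∑ a : Fin N → Bool, P a = 1

/-- An `N`-party no-signalling box: `P x` is a distribution for every input `x`, and
the marginal on any set `S` of parties depends only on the inputs of parties in `S`. -/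
def IsNSBox {N : ℕ} (P : (Fin N → Bool) → (Fin N → Bool) → ℝ) : Prop :=
  (∀ x, IsProb (P x)) ∧
  ∀ (x y : Fin N → Bool) (S : Finset (Fin N)), (∀ i ∈ S, x i = y i) →
    ∀ a : Fin N → Bool,
      ∑ b ∈ Finset.univ.filter (fun b : Fin N → Bool => ∀ i ∈ S, b i = a i), P x b
        = ∑ b ∈ Finset.univ.filter (fun b : Fin N → Bool => ∀ i ∈ S, b i = a i), P y b


lemma sum_expand (Q : (Fin 3 → Bool) → ℝ) :
    ∑ a : Fin 3 → Bool, Q a =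
      Q ![false,false,false] + Q ![false,false,true] + Q ![false,true,false]
      + Q ![false,true,true] + Q ![true,false,false] + Q ![true,false,true]
      + Q ![true,true,false] + Q ![true,true,true] := by
  rw [show (Finset.univ : Finset (Fin 3 → Bool)) = {![false,false,false], ![false,false,true], ![false,true,false], ![false,true,true], ![true,false,false], ![true,false,true], ![true,true,false], ![true,true,true]} by decide]
  repeat rw [Finset.sum_insert (by decide)]
  rw [Finset.sum_singleton]; ring

lemma filter_sum_expand (Q : (Fin 3 → Bool) → ℝ) (p : (Fin 3 → Bool) → Prop) [DecidablePred p] :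
    ∑ b ∈ Finset.univ.filter p, Q b =
      (if p ![false,false,false] then Q ![false,false,false] else 0)
      + (if p ![false,false,true] then Q ![false,false,true] else 0)
      + (if p ![false,true,false] then Q ![false,true,false] else 0)
      + (if p ![false,true,true] then Q ![false,true,true] else 0)
      + (if p ![true,false,false] then Q ![true,false,false] else 0)
      + (if p ![true,false,true] then Q ![true,false,true] else 0)
      + (if p ![true,true,false] then Q ![true,true,false] else 0)
      + (if p ![true,true,true] then Q ![true,true,true] else 0) := by
  rw [Finset.sum_filter, sum_expand]

lemma corr_u (Q : (Fin 3 → Bool) → ℝ) :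
    corr Q Finset.univ = Q ![false,false,false] - Q ![false,false,true] - Q ![false,true,false] + Q ![false,true,true] - Q ![true,false,false] + Q ![true,false,true] + Q ![true,true,false] - Q ![true,true,true] := by
  rw [corr, sum_expand]
  simp [sgn, Fin.prod_univ_three]
  try ring

lemma corr_s0 (Q : (Fin 3 → Bool) → ℝ) :
    corr Q {0} = Q ![false,false,false] + Q ![false,false,true] + Q ![false,true,false] + Q ![false,true,true] - Q ![true,false,false] - Q ![true,false,true] - Q ![true,true,false] - Q ![true,true,true] := by
  rw [corr, sum_expand]
  simp [sgn]
  try ring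

lemma corr_s1 (Q : (Fin 3 → Bool) → ℝ) :
    corr Q {1} = Q ![false,false,false] + Q ![false,false,true] - Q ![false,true,false] - Q ![false,true,true] + Q ![true,false,false] + Q ![true,false,true] - Q ![true,true,false] - Q ![true,true,true] := by
  rw [corr, sum_expand]
  simp [sgn]
  try ring

lemma corr_s2 (Q : (Fin 3 → Bool) → ℝ) :
    corr Q {2} = Q ![false,false,false] - Q ![false,false,true] + Q ![false,true,false] - Q ![false,true,true] + Q ![true,false,false] - Q ![true,false,true] + Q ![true,true,false] - Q ![true,true,true] := by
  rw [corr, sum_expand]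
  simp [sgn]
  try ring

lemma corr_p01 (Q : (Fin 3 → Bool) → ℝ) :
    corr Q ({0,1} : Finset (Fin 3)) = Q ![false,false,false] + Q ![false,false,true] - Q ![false,true,false] - Q ![false,true,true] - Q ![true,false,false] - Q ![true,false,true] + Q ![true,true,false] + Q ![true,true,true] := by
  rw [corr, sum_expand]
  simp [sgn, Finset.prod_pair (show (0:Fin 3) ≠ 1 by decide)]
  try ring

lemma corr_p02 (Q : (Fin 3 → Bool) → ℝ) :
    corr Q ({0,2} : Finset (Fin 3)) = Q ![false,false,false] - Q ![false,false,true] + Q ![false,true,false] - Q ![false,true,true] - Q ![true,false,false] + Q ![true,false,true] - Q ![true,true,false] + Q ![true,true,true] := by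
  rw [corr, sum_expand]
  simp [sgn, Finset.prod_pair (show (0:Fin 3) ≠ 2 by decide)]
  try ring

lemma corr_p12 (Q : (Fin 3 → Bool) → ℝ) :
    corr Q ({1,2} : Finset (Fin 3)) = Q ![false,false,false] - Q ![false,false,true] - Q ![false,true,false] + Q ![false,true,true] + Q ![true,false,false] - Q ![true,false,true] - Q ![true,true,false] + Q ![true,true,true] := by
  rw [corr, sum_expand]
  simp [sgn, Finset.prod_pair (show (1:Fin 3) ≠ 2 by decide)]
  try ring


/-- For a tripartite no-signalling box maximally violating the Mermin inequality,
the marginal correlators `⟨0⟩₁ + ⟨0⟩₂ + ⟨1⟩₃ ≤ 1`. -/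
theorem mermin_marginal_bound (P : (Fin 3 → Bool) → (Fin 3 → Bool) → ℝ)
    (hP : IsNSBox P)
    (h001 : corr (P ![false, false, true]) Finset.univ = 1)
    (h010 : corr (P ![false, true, false]) Finset.univ = 1)
    (h100 : corr (P ![true, false, false]) Finset.univ = 1)
    (h111 : corr (P ![true, true, true]) Finset.univ = -1) :
    corr (P ![false, false, true]) {0} + corr (P ![false, false, true]) {1}
      + corr (P ![false, false, true]) {2} ≤ 1 := by
  obtain ⟨hprob, hns⟩ := hP
  rw [corr_u] at h001 h010 h100 h111
  rw [corr_s0, corr_s1, corr_s2]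
  have hsumQ1 := (hprob ![false, false, true]).2
  rw [sum_expand] at hsumQ1
  have hsumQ2 := (hprob ![false, true, false]).2
  rw [sum_expand] at hsumQ2
  have hsumQ3 := (hprob ![true, false, false]).2
  rw [sum_expand] at hsumQ3
  have hsumQ4 := (hprob ![true, true, true]).2
  rw [sum_expand] at hsumQ4
  have hsumQ5 := (hprob ![true, true, false]).2
  rw [sum_expand] at hsumQ5
  have hposQ1_0 := (hprob ![false, false, true]).1 ![false,false,false]
  have hposQ1_1 := (hprob ![false, false, true]).1 ![false,false,true]
  have hposQ1_2 := (hprob ![false, false, true]).1 ![false,true,false]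
  have hposQ1_3 := (hprob ![false, false, true]).1 ![false,true,true]
  have hposQ1_4 := (hprob ![false, false, true]).1 ![true,false,false]
  have hposQ1_5 := (hprob ![false, false, true]).1 ![true,false,true]
  have hposQ1_6 := (hprob ![false, false, true]).1 ![true,true,false]
  have hposQ1_7 := (hprob ![false, false, true]).1 ![true,true,true]
  have hposQ2_0 := (hprob ![false, true, false]).1 ![false,false,false]
  have hposQ2_1 := (hprob ![false, true, false]).1 ![false,false,true]
  have hposQ2_2 := (hprob ![false, true, false]).1 ![false,true,false]
  have hposQ2_3 := (hprob ![false, true, false]).1 ![false,true,true]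
  have hposQ2_4 := (hprob ![false, true, false]).1 ![true,false,false]
  have hposQ2_5 := (hprob ![false, true, false]).1 ![true,false,true]
  have hposQ2_6 := (hprob ![false, true, false]).1 ![true,true,false]
  have hposQ2_7 := (hprob ![false, true, false]).1 ![true,true,true]
  have hposQ3_0 := (hprob ![true, false, false]).1 ![false,false,false]
  have hposQ3_1 := (hprob ![true, false, false]).1 ![false,false,true]
  have hposQ3_2 := (hprob ![true, false, false]).1 ![false,true,false]
  have hposQ3_3 := (hprob ![true, false, false]).1 ![false,true,true]
  have hposQ3_4 := (hprob ![true, false, false]).1 ![true,false,false]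
  have hposQ3_5 := (hprob ![true, false, false]).1 ![true,false,true]
  have hposQ3_6 := (hprob ![true, false, false]).1 ![true,true,false]
  have hposQ3_7 := (hprob ![true, false, false]).1 ![true,true,true]
  have hposQ4_0 := (hprob ![true, true, true]).1 ![false,false,false]
  have hposQ4_1 := (hprob ![true, true, true]).1 ![false,false,true]
  have hposQ4_2 := (hprob ![true, true, true]).1 ![false,true,false]
  have hposQ4_3 := (hprob ![true, true, true]).1 ![false,true,true]
  have hposQ4_4 := (hprob ![true, true, true]).1 ![true,false,false]
  have hposQ4_5 := (hprob ![true, true, true]).1 ![true,false,true]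
  have hposQ4_6 := (hprob ![true, true, true]).1 ![true,true,false]
  have hposQ4_7 := (hprob ![true, true, true]).1 ![true,true,true]
  have hposQ5_0 := (hprob ![true, true, false]).1 ![false,false,false]
  have hposQ5_1 := (hprob ![true, true, false]).1 ![false,false,true]
  have hposQ5_2 := (hprob ![true, true, false]).1 ![false,true,false]
  have hposQ5_3 := (hprob ![true, true, false]).1 ![false,true,true]
  have hposQ5_4 := (hprob ![true, true, false]).1 ![true,false,false]
  have hposQ5_5 := (hprob ![true, true, false]).1 ![true,false,true]
  have hposQ5_6 := (hprob ![true, true, false]).1 ![true,true,false]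
  have hposQ5_7 := (hprob ![true, true, false]).1 ![true,true,true]
  have hnsa0 := hns ![true, true, false] ![true, true, true] ({0,1} : Finset (Fin 3)) (by decide) ![false,false,false]
  rw [filter_sum_expand, filter_sum_expand] at hnsa0
  norm_num [Finset.mem_insert, Finset.mem_singleton] at hnsa0
  have hnsa1 := hns ![true, true, false] ![true, true, true] ({0,1} : Finset (Fin 3)) (by decide) ![false,true,false]
  rw [filter_sum_expand, filter_sum_expand] at hnsa1
  norm_num [Finset.mem_insert, Finset.mem_singleton] at hnsa1
  have hnsa2 := hns ![true, true, false] ![true, true, true] ({0,1} : Finset (Fin 3)) (by decide) ![true,false,false]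
  rw [filter_sum_expand, filter_sum_expand] at hnsa2
  norm_num [Finset.mem_insert, Finset.mem_singleton] at hnsa2
  have hnsa3 := hns ![true, true, false] ![true, true, true] ({0,1} : Finset (Fin 3)) (by decide) ![true,true,false]
  rw [filter_sum_expand, filter_sum_expand] at hnsa3
  norm_num [Finset.mem_insert, Finset.mem_singleton] at hnsa3
  have hnsb0 := hns ![true, true, false] ![true, false, false] ({0,2} : Finset (Fin 3)) (by decide) ![false,false,false]
  rw [filter_sum_expand, filter_sum_expand] at hnsb0
  norm_num [Finset.mem_insert, Finset.mem_singleton, Matrix.cons_val_two, Matrix.tail_cons, Matrix.head_cons] at hnsb0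
  have hnsb1 := hns ![true, true, false] ![true, false, false] ({0,2} : Finset (Fin 3)) (by decide) ![false,false,true]
  rw [filter_sum_expand, filter_sum_expand] at hnsb1
  norm_num [Finset.mem_insert, Finset.mem_singleton, Matrix.cons_val_two, Matrix.tail_cons, Matrix.head_cons] at hnsb1
  have hnsb2 := hns ![true, true, false] ![true, false, false] ({0,2} : Finset (Fin 3)) (by decide) ![true,false,false]
  rw [filter_sum_expand, filter_sum_expand] at hnsb2
  norm_num [Finset.mem_insert, Finset.mem_singleton, Matrix.cons_val_two, Matrix.tail_cons, Matrix.head_cons] at hnsb2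
  have hnsb3 := hns ![true, true, false] ![true, false, false] ({0,2} : Finset (Fin 3)) (by decide) ![true,false,true]
  rw [filter_sum_expand, filter_sum_expand] at hnsb3
  norm_num [Finset.mem_insert, Finset.mem_singleton, Matrix.cons_val_two, Matrix.tail_cons, Matrix.head_cons] at hnsb3
  have hnsc0 := hns ![true, true, false] ![false, true, false] ({1,2} : Finset (Fin 3)) (by decide) ![false,false,false]
  rw [filter_sum_expand, filter_sum_expand] at hnsc0
  norm_num [Finset.mem_insert, Finset.mem_singleton, Matrix.cons_val_two, Matrix.tail_cons, Matrix.head_cons] at hnsc0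
  have hnsc1 := hns ![true, true, false] ![false, true, false] ({1,2} : Finset (Fin 3)) (by decide) ![false,false,true]
  rw [filter_sum_expand, filter_sum_expand] at hnsc1
  norm_num [Finset.mem_insert, Finset.mem_singleton, Matrix.cons_val_two, Matrix.tail_cons, Matrix.head_cons] at hnsc1
  have hnsc2 := hns ![true, true, false] ![false, true, false] ({1,2} : Finset (Fin 3)) (by decide) ![false,true,false]
  rw [filter_sum_expand, filter_sum_expand] at hnsc2
  norm_num [Finset.mem_insert, Finset.mem_singleton, Matrix.cons_val_two, Matrix.tail_cons, Matrix.head_cons] at hnsc2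
  have hnsc3 := hns ![true, true, false] ![false, true, false] ({1,2} : Finset (Fin 3)) (by decide) ![false,true,true]
  rw [filter_sum_expand, filter_sum_expand] at hnsc3
  norm_num [Finset.mem_insert, Finset.mem_singleton, Matrix.cons_val_two, Matrix.tail_cons, Matrix.head_cons] at hnsc3
  have hnsd0 := hns ![true, true, true] ![false, false, true] ({2} : Finset (Fin 3)) (by decide) ![false,false,false]
  rw [filter_sum_expand, filter_sum_expand] at hnsd0
  norm_num [Finset.mem_insert, Finset.mem_singleton, Matrix.cons_val_two, Matrix.tail_cons, Matrix.head_cons] at hnsd0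
  have hnsd1 := hns ![true, true, true] ![false, false, true] ({2} : Finset (Fin 3)) (by decide) ![false,false,true]
  rw [filter_sum_expand, filter_sum_expand] at hnsd1
  norm_num [Finset.mem_insert, Finset.mem_singleton, Matrix.cons_val_two, Matrix.tail_cons, Matrix.head_cons] at hnsd1
  have hnse0 := hns ![true, false, false] ![false, false, true] ({1} : Finset (Fin 3)) (by decide) ![false,false,false]
  rw [filter_sum_expand, filter_sum_expand] at hnse0
  norm_num [Finset.mem_insert, Finset.mem_singleton] at hnse0
  have hnse1 := hns ![true, false, false] ![false, false, true] ({1} : Finset (Fin 3)) (by decide) ![false,true,false]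
  rw [filter_sum_expand, filter_sum_expand] at hnse1
  norm_num [Finset.mem_insert, Finset.mem_singleton] at hnse1
  have hnsf0 := hns ![false, true, false] ![false, false, true] ({0} : Finset (Fin 3)) (by decide) ![false,false,false]
  rw [filter_sum_expand, filter_sum_expand] at hnsf0
  norm_num [Finset.mem_insert, Finset.mem_singleton] at hnsf0
  have hnsf1 := hns ![false, true, false] ![false, false, true] ({0} : Finset (Fin 3)) (by decide) ![true,false,false]
  rw [filter_sum_expand, filter_sum_expand] at hnsf1
  norm_num [Finset.mem_insert, Finset.mem_singleton] at hnsf1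
  linarith [hsumQ1, hsumQ2, hsumQ3, hsumQ4, hsumQ5, hposQ1_0, hposQ1_1, hposQ1_2, hposQ1_3, hposQ1_4, hposQ1_5, hposQ1_6, hposQ1_7, hposQ2_0, hposQ2_1, hposQ2_2, hposQ2_3, hposQ2_4, hposQ2_5, hposQ2_6, hposQ2_7, hposQ3_0, hposQ3_1, hposQ3_2, hposQ3_3, hposQ3_4, hposQ3_5, hposQ3_6, hposQ3_7, hposQ4_0, hposQ4_1, hposQ4_2, hposQ4_3, hposQ4_4, hposQ4_5, hposQ4_6, hposQ4_7, hposQ5_0, hposQ5_1, hposQ5_2, hposQ5_3, hposQ5_4, hposQ5_5, hposQ5_6, hposQ5_7, hnsa0, hnsa1, hnsa2, hnsa3, hnsb0, hnsb1, hnsb2, hnsb3, hnsc0, hnsc1, hnsc2, hnsc3, hnsd0, hnsd1, hnse0, hnse1, hnsf0, hnsf1]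
end

section
/- Let P be a tripartite no-signalling distribution maximally violating the three-party Mermin inequality. Then for the input x_m = (0,0,1), the probability that exactly one of the three outcomes equals -1 is P = (1/4)(3 - ⟨0⟩₁ - ⟨0⟩₂ - ⟨1⟩₃), and this probability is at least 1/2. -/
lemma univ_pi3 : (Finset.univ : Finset (Fin 3 → Bool)) =
    {![false,false,false], ![true,false,false], ![false,true,false], ![true,true,false],
      ![false,false,true], ![true,false,true], ![false,true,true], ![true,true,true]} := by
  decide

lemma sum_pi3 (f : (Fin 3 → Bool) → ℝ) :
    ∑ a : Fin 3 → Bool, f a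
      = f ![false,false,false] + f ![true,false,false] + f ![false,true,false]
        + f ![true,true,false] + f ![false,false,true] + f ![true,false,true]
        + f ![false,true,true] + f ![true,true,true] := by
  rw [univ_pi3]
  rw [Finset.sum_insert (by decide), Finset.sum_insert (by decide),
      Finset.sum_insert (by decide), Finset.sum_insert (by decide),
      Finset.sum_insert (by decide), Finset.sum_insert (by decide),
      Finset.sum_insert (by decide), Finset.sum_singleton]
  ring

/-- For a tripartite no-signalling box maximally violating the Mermin inequality, the
probability (for input `(0,0,1)`) that exactly one outcome is `-1` equals
`(1/4)(3 - ⟨0⟩₁ - ⟨0⟩₂ - ⟨1⟩₃)` and is at least `1/2`. -/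
theorem mermin_tripartite_randomness (P : (Fin 3 → Bool) → (Fin 3 → Bool) → ℝ)
    (hP : IsNSBox P)
    (h001 : corr (P ![false, false, true]) Finset.univ = 1)
    (h010 : corr (P ![false, true, false]) Finset.univ = 1)
    (h100 : corr (P ![true, false, false]) Finset.univ = 1)
    (h111 : corr (P ![true, true, true]) Finset.univ = -1) :
    P ![false, false, true] ![false, true, true]
        + P ![false, false, true] ![true, false, true]
        + P ![false, false, true] ![true, true, false]
      = (1 / 4) * (3 - corr (P ![false, false, true]) {0}
          - corr (P ![false, false, true]) {1} - corr (P ![false, false, true]) {2}) ∧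
    (1 / 2 : ℝ) ≤ P ![false, false, true] ![false, true, true]
        + P ![false, false, true] ![true, false, true]
        + P ![false, false, true] ![true, true, false] := by
  have hn0 := (hP.1 ![false, false, false]).2
  rw [sum_pi3] at hn0
  have hn1 := (hP.1 ![true, false, false]).2
  rw [sum_pi3] at hn1
  have hn2 := (hP.1 ![false, true, false]).2
  rw [sum_pi3] at hn2
  have hn3 := (hP.1 ![true, true, false]).2
  rw [sum_pi3] at hn3
  have hn4 := (hP.1 ![false, false, true]).2
  rw [sum_pi3] at hn4
  have hn7 := (hP.1 ![true, true, true]).2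
  rw [sum_pi3] at hn7
  have hns0 := hP.2 ![false, false, false] ![false, false, true] {0, 1} (by decide) ![false, true, false]
  rw [Finset.sum_filter, Finset.sum_filter, sum_pi3, sum_pi3] at hns0
  simp (config := { decide := true }) only [if_true, if_neg, zero_add, add_zero] at hns0
  have hns1 := hP.2 ![false, false, false] ![false, false, true] {0, 1} (by decide) ![true, false, false]
  rw [Finset.sum_filter, Finset.sum_filter, sum_pi3, sum_pi3] at hns1
  simp (config := { decide := true }) only [if_true, if_neg, zero_add, add_zero] at hns1
  have hns2 := hP.2 ![false, false, false] ![false, false, true] {0, 1} (by decide) ![true, true, false]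
  rw [Finset.sum_filter, Finset.sum_filter, sum_pi3, sum_pi3] at hns2
  simp (config := { decide := true }) only [if_true, if_neg, zero_add, add_zero] at hns2
  have hns3 := hP.2 ![true, true, false] ![true, true, true] {0, 1} (by decide) ![false, false, false]
  rw [Finset.sum_filter, Finset.sum_filter, sum_pi3, sum_pi3] at hns3
  simp (config := { decide := true }) only [if_true, if_neg, zero_add, add_zero] at hns3
  have hns4 := hP.2 ![true, true, false] ![true, true, true] {0, 1} (by decide) ![true, true, false]
  rw [Finset.sum_filter, Finset.sum_filter, sum_pi3, sum_pi3] at hns4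
  simp (config := { decide := true }) only [if_true, if_neg, zero_add, add_zero] at hns4
  have hns5 := hP.2 ![false, false, false] ![false, true, false] {0, 2} (by decide) ![false, false, false]
  rw [Finset.sum_filter, Finset.sum_filter, sum_pi3, sum_pi3] at hns5
  simp (config := { decide := true }) only [if_true, if_neg, zero_add, add_zero] at hns5
  have hns6 := hP.2 ![false, false, false] ![false, true, false] {0, 2} (by decide) ![false, false, true]
  rw [Finset.sum_filter, Finset.sum_filter, sum_pi3, sum_pi3] at hns6
  simp (config := { decide := true }) only [if_true, if_neg, zero_add, add_zero] at hns6
  have hns7 := hP.2 ![true, false, false] ![true, true, false] {0, 2} (by decide) ![false, false, false]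
  rw [Finset.sum_filter, Finset.sum_filter, sum_pi3, sum_pi3] at hns7
  simp (config := { decide := true }) only [if_true, if_neg, zero_add, add_zero] at hns7
  have hns8 := hP.2 ![true, false, false] ![true, true, false] {0, 2} (by decide) ![true, false, true]
  rw [Finset.sum_filter, Finset.sum_filter, sum_pi3, sum_pi3] at hns8
  simp (config := { decide := true }) only [if_true, if_neg, zero_add, add_zero] at hns8
  have hns9 := hP.2 ![true, false, true] ![true, true, true] {0, 2} (by decide) ![false, false, false]
  rw [Finset.sum_filter, Finset.sum_filter, sum_pi3, sum_pi3] at hns9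
  simp (config := { decide := true }) only [if_true, if_neg, zero_add, add_zero] at hns9
  have hns10 := hP.2 ![true, false, true] ![true, true, true] {0, 2} (by decide) ![true, false, false]
  rw [Finset.sum_filter, Finset.sum_filter, sum_pi3, sum_pi3] at hns10
  simp (config := { decide := true }) only [if_true, if_neg, zero_add, add_zero] at hns10
  have hns11 := hP.2 ![false, false, false] ![true, false, false] {1, 2} (by decide) ![false, false, false]
  rw [Finset.sum_filter, Finset.sum_filter, sum_pi3, sum_pi3] at hns11
  simp (config := { decide := true }) only [if_true, if_neg, zero_add, add_zero] at hns11
  have hns12 := hP.2 ![false, false, false] ![true, false, false] {1, 2} (by decide) ![false, false, true]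
  rw [Finset.sum_filter, Finset.sum_filter, sum_pi3, sum_pi3] at hns12
  simp (config := { decide := true }) only [if_true, if_neg, zero_add, add_zero] at hns12
  have hns13 := hP.2 ![false, true, false] ![true, true, false] {1, 2} (by decide) ![false, false, false]
  rw [Finset.sum_filter, Finset.sum_filter, sum_pi3, sum_pi3] at hns13
  simp (config := { decide := true }) only [if_true, if_neg, zero_add, add_zero] at hns13
  have hns14 := hP.2 ![false, true, false] ![true, true, false] {1, 2} (by decide) ![false, true, true]
  rw [Finset.sum_filter, Finset.sum_filter, sum_pi3, sum_pi3] at hns14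
  simp (config := { decide := true }) only [if_true, if_neg, zero_add, add_zero] at hns14
  have hns15 := hP.2 ![false, false, true] ![true, false, true] {1, 2} (by decide) ![false, false, false]
  rw [Finset.sum_filter, Finset.sum_filter, sum_pi3, sum_pi3] at hns15
  simp (config := { decide := true }) only [if_true, if_neg, zero_add, add_zero] at hns15
  have hns16 := hP.2 ![false, false, true] ![true, false, true] {1, 2} (by decide) ![false, true, false]
  rw [Finset.sum_filter, Finset.sum_filter, sum_pi3, sum_pi3] at hns16
  simp (config := { decide := true }) only [if_true, if_neg, zero_add, add_zero] at hns16
  unfold corr at h001 h010 h100 h111 ⊢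
  rw [sum_pi3] at h001 h010 h100 h111
  rw [sum_pi3, sum_pi3, sum_pi3]
  simp only [Fin.prod_univ_three, sgn, Finset.prod_singleton, Matrix.cons_val] at h001 h010 h100 h111 ⊢
  norm_num at h001 h010 h100 h111 ⊢
  constructor <;>
    linarith [(hP.1 ![true, false, false]).1 ![false, true, false], (hP.1 ![true, false, false]).1 ![true, true, true], (hP.1 ![false, true, false]).1 ![true, false, false], (hP.1 ![false, true, false]).1 ![true, true, true], (hP.1 ![true, true, false]).1 ![true, true, false], (hP.1 ![true, true, false]).1 ![false, false, true], (hP.1 ![false, false, true]).1 ![true, false, false], (hP.1 ![false, false, true]).1 ![false, true, false], (hP.1 ![false, false, true]).1 ![false, false, true], (hP.1 ![true, true, true]).1 ![true, false, true], (hP.1 ![true, true, true]).1 ![false, true, true], (hP.1 ![false, false, true]).1 ![true, true, true]]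
end

section
/- Let P be a probability distribution on {+1,-1}^N (N odd) with ⟨a₁⋯a_N⟩ = +1. Then P(a) = 2^{-(N-1)}·∑_{S: |S| ≤ (N-1)/2} (∏_{i∈S} a_i)·⟨∏_{i∈S}⟩ for all a with ∏_i a_i = +1, i.e., P is determined on its support by its correlators of order at most (N-1)/2. -/
lemma sgn_mul_self (b : Bool) : sgn b * sgn b = 1 := by
  unfold sgn; cases b <;> norm_num

lemma prod_sgn_pm {N : ℕ} (a : Fin N → Bool) (S : Finset (Fin N)) :
    (∏ i ∈ S, sgn (a i)) = 1 ∨ (∏ i ∈ S, sgn (a i)) = -1 := by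
  rw [← mul_self_eq_one_iff, ← Finset.prod_mul_distrib]
  exact Finset.prod_eq_one (fun i _ => sgn_mul_self (a i))

lemma orth {N : ℕ} (a b : Fin N → Bool) :
    ∑ S : Finset (Fin N), ∏ i ∈ S, (sgn (a i) * sgn (b i))
      = if a = b then (2 : ℝ) ^ N else 0 := by
  have h : ∑ S : Finset (Fin N), ∏ i ∈ S, (sgn (a i) * sgn (b i))
      = ∏ i : Fin N, (sgn (a i) * sgn (b i) + 1) := by
    rw [Finset.prod_add]
    rw [← Finset.powerset_univ]
    exact (Finset.sum_congr rfl (fun t _ => by simp)).symm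
  rw [h]
  by_cases hab : a = b
  · subst hab
    simp only [if_pos rfl]
    rw [Finset.prod_congr rfl (fun i _ => by rw [sgn_mul_self]; norm_num : ∀ i ∈ Finset.univ, (sgn (a i) * sgn (a i) + 1) = 2)]
    simp
  · simp only [if_neg hab]
    obtain ⟨i, hi⟩ : ∃ i, a i ≠ b i := by
      by_contra h'; push_neg at h'; exact hab (funext h')
    apply Finset.prod_eq_zero (Finset.mem_univ i)
    unfold sgn
    cases ha : a i <;> cases hb : b i <;> simp_all

lemma inversion {N : ℕ} (P : (Fin N → Bool) → ℝ) (a : Fin N → Bool) :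
    ∑ S : Finset (Fin N), (∏ i ∈ S, sgn (a i)) * corr P S = (2 : ℝ) ^ N * P a := by
  unfold corr
  calc ∑ S : Finset (Fin N), (∏ i ∈ S, sgn (a i)) * ∑ b : Fin N → Bool, P b * ∏ i ∈ S, sgn (b i)
      = ∑ b : Fin N → Bool, P b * ∑ S : Finset (Fin N), ∏ i ∈ S, (sgn (a i) * sgn (b i)) := by
        simp_rw [Finset.mul_sum, Finset.prod_mul_distrib]
        rw [Finset.sum_comm]
        apply Finset.sum_congr rfl; intro b _
        apply Finset.sum_congr rfl; intro S _
        ring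
    _ = (2 : ℝ) ^ N * P a := by
        rw [Finset.sum_congr rfl (fun b _ => by rw [orth a b])]
        simp [mul_comm]

/-- If the full correlator equals `1` (N odd), then on its support `P` is determined by
its correlators of order at most `(N-1)/2`. -/
theorem support_determined_by_low_order_correlators (N : ℕ) (hodd : Odd N)
    (P : (Fin N → Bool) → ℝ) (hP : IsProb P) (hfull : corr P Finset.univ = 1) :
    ∀ a : Fin N → Bool, (∏ i, sgn (a i)) = 1 →
      P a = (2 : ℝ) ^ (-(N - 1 : ℤ)) *
        ∑ S ∈ Finset.univ.filter (fun S : Finset (Fin N) => S.card ≤ (N - 1) / 2),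
          (∏ i ∈ S, sgn (a i)) * corr P S := by
  obtain ⟨hnn, hsum⟩ := hP
  have hN1 : 1 ≤ N := hodd.pos
  -- support lemma
  have hsupp : ∀ b : Fin N → Bool, (∏ i, sgn (b i)) = -1 → P b = 0 := by
    intro b hb
    have hzero : ∑ c : Fin N → Bool, P c * (1 - ∏ i, sgn (c i)) = 0 := by
      simp only [mul_sub, mul_one, Finset.sum_sub_distrib, hsum]
      unfold corr at hfull
      rw [hfull]; ring
    have hnn' : ∀ c ∈ (Finset.univ : Finset (Fin N → Bool)),
        0 ≤ P c * (1 - ∏ i, sgn (c i)) := by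
      intro c _
      apply mul_nonneg (hnn c)
      rcases prod_sgn_pm c Finset.univ with h | h <;> rw [h] <;> norm_num
    have := (Finset.sum_eq_zero_iff_of_nonneg hnn').mp hzero b (Finset.mem_univ b)
    rw [hb] at this
    linarith
  -- corr of complement
  have hcorr_compl : ∀ S : Finset (Fin N), corr P Sᶜ = corr P S := by
    intro S
    unfold corr
    apply Finset.sum_congr rfl
    intro b _
    by_cases hb : P b = 0
    · simp [hb]
    · have hful : (∏ i ∈ S, sgn (b i)) * ∏ i ∈ Sᶜ, sgn (b i) = 1 := by
        rw [Finset.prod_mul_prod_compl]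
        rcases prod_sgn_pm b Finset.univ with h | h
        · exact h
        · exact absurd (hsupp b h) hb
      rcases prod_sgn_pm b S with h | h
      · rw [h] at hful ⊢
        have hx : (∏ i ∈ Sᶜ, sgn (b i)) = 1 := by linarith
        rw [hx]
      · rw [h] at hful ⊢
        have hx : (∏ i ∈ Sᶜ, sgn (b i)) = -1 := by linarith
        rw [hx]
  intro a ha
  -- χ of complement for a
  have hchi : ∀ S : Finset (Fin N), (∏ i ∈ Sᶜ, sgn (a i)) = ∏ i ∈ S, sgn (a i) := by
    intro S
    have hful : (∏ i ∈ S, sgn (a i)) * ∏ i ∈ Sᶜ, sgn (a i) = 1 := by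
      rw [Finset.prod_mul_prod_compl]; exact ha
    rcases prod_sgn_pm a S with h | h
    · rw [h] at hful ⊢; linarith
    · rw [h] at hful ⊢; linarith
  set F : Finset (Fin N) → ℝ := fun S => (∏ i ∈ S, sgn (a i)) * corr P S with hF
  set m := (N - 1) / 2 with hm
  have hsplit : ∑ S ∈ Finset.univ.filter (fun S : Finset (Fin N) => S.card ≤ m), F S
      + ∑ S ∈ Finset.univ.filter (fun S : Finset (Fin N) => ¬ S.card ≤ m), F S
      = ∑ S : Finset (Fin N), F S := Finset.sum_filter_add_sum_filter_not _ _ _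
  have hbij : ∑ S ∈ Finset.univ.filter (fun S : Finset (Fin N) => ¬ S.card ≤ m), F S
      = ∑ S ∈ Finset.univ.filter (fun S : Finset (Fin N) => S.card ≤ m), F S := by
    refine Finset.sum_bij' (fun S _ => Sᶜ) (fun S _ => Sᶜ) ?_ ?_ ?_ ?_ ?_
    · intro S hS
      simp only [Finset.mem_filter, Finset.mem_univ, true_and] at hS ⊢
      rw [Finset.card_compl]
      simp only [Fintype.card_fin]
      have := S.card_le_univ
      simp only [Fintype.card_fin] at this
      obtain ⟨k, hk⟩ := hodd
      omega
    · intro S hS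
      simp only [Finset.mem_filter, Finset.mem_univ, true_and] at hS ⊢
      rw [Finset.card_compl]
      simp only [Fintype.card_fin]
      have := S.card_le_univ
      simp only [Fintype.card_fin] at this
      obtain ⟨k, hk⟩ := hodd
      omega
    · intro S _; exact compl_compl S
    · intro S _; exact compl_compl S
    · intro S _
      show F S = F Sᶜ
      rw [hF]
      simp only
      rw [hchi S, hcorr_compl S]
  have hinv := inversion P a
  have hsumL : ∑ S ∈ Finset.univ.filter (fun S : Finset (Fin N) => S.card ≤ m), F S
      = (2 : ℝ) ^ (N - 1) * P a := by
    have h2 : 2 * ∑ S ∈ Finset.univ.filter (fun S : Finset (Fin N) => S.card ≤ m), F S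
        = (2 : ℝ) ^ N * P a := by
      rw [← hinv, ← hsplit, hbij]; ring
    have hpow : (2 : ℝ) ^ N = 2 * (2 : ℝ) ^ (N - 1) := by
      rw [← pow_succ']
      congr 1
      omega
    rw [hpow] at h2
    linarith
  rw [hsumL]
  rw [← mul_assoc]
  have : (2 : ℝ) ^ (-(N - 1 : ℤ)) * (2 : ℝ) ^ (N - 1) = 1 := by
    rw [show ((2:ℝ) ^ (N - 1) = (2:ℝ) ^ ((N - 1 : ℕ) : ℤ)) from (zpow_natCast 2 (N-1)).symm]
    rw [← zpow_add₀ (by norm_num : (2:ℝ) ≠ 0)]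
    have : (-(N - 1 : ℤ) + ((N - 1 : ℕ) : ℤ)) = 0 := by
      omega
    rw [this]; norm_num
  rw [this, one_mul]
end

section
/- For odd N ≥ 3 and 0 ≤ i ≤ (N-1)/2, define β_i = (-1)^{(N-i)/2} if i is odd and β_i = (-1)^{i/2} if i is even. Then for all such i, β_i equals 2^{-(N-3)/2}·h_N·α_i', where α_i' are as defined from the inclusion–exclusion counting coefficients α_i (with α_0' = α_0 - 2^{N-2}) and h_N = √2·cos(π(N+4)/4). That is, the coefficient vectors (β_i) and (h_N·α_i') are proportional with positive proportionality constant 2^{(N-3)/2}. -/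
/-- `h_N = √2 · cos(π(N+4)/4)`. -/
noncomputable def hN (N : ℕ) : ℝ := Real.sqrt 2 * Real.cos (Real.pi * (N + 4) / 4)

/-- `α_i = ∑_{r=0}^{i} (-1)^r C(i,r) ∑_{j ≥ 0} C(N-i, 4j+2-r)` where the inner sum
ranges over all `j` with `0 ≤ 4j+2-r` (terms with `4j+2-r > N-i` vanish). -/
def alpha (N i : ℕ) : ℤ :=
  ∑ r ∈ Finset.range (i + 1), (-1) ^ r * (i.choose r) *
    ∑ j ∈ Finset.range (N + 1), if r ≤ 4 * j + 2 then ((N - i).choose (4 * j + 2 - r) : ℤ) else 0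

/-- `α_0' = α_0 - 2^{N-2}` and `α_i' = α_i` for `i ≥ 1`. -/
def alpha' (N i : ℕ) : ℤ := if i = 0 then alpha N 0 - 2 ^ (N - 2) else alpha N i

/-- `β_i = (-1)^{(N-i)/2}` for odd `i`, `β_i = (-1)^{i/2}` for even `i`. -/
noncomputable def beta (N i : ℕ) : ℝ :=
  if Odd i then (-1 : ℝ) ^ ((N - i) / 2) else (-1 : ℝ) ^ (i / 2)

/-- Gaussian integer powers: `g2 n` represents `(1+I)^n` as `(re, im)`. -/
def g2 : ℕ → ℤ × ℤ
  | 0 => (1, 0)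
  | n+1 => ((g2 n).1 - (g2 n).2, (g2 n).1 + (g2 n).2)

/-- `wp t z = Re(I^(t-2) * z)`. -/
def wp (t : ℕ) (z : ℤ × ℤ) : ℤ :=
  if t % 4 = 0 then -z.1 else if t % 4 = 1 then z.2 else if t % 4 = 2 then z.1 else -z.2

def Sv (N M r : ℕ) : ℤ :=
  ∑ j ∈ Finset.range (N + 1), if r ≤ 4 * j + 2 then (M.choose (4 * j + 2 - r) : ℤ) else 0

lemma neg_one_pow_ite (r : ℕ) : (-1:ℤ)^r = if r % 2 = 0 then 1 else -1 := by
  rcases Nat.even_or_odd r with he | ho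
  · rw [he.neg_one_pow, if_pos (Nat.even_iff.mp he)]
  · rw [ho.neg_one_pow, if_neg (by simp [Nat.odd_iff.mp ho])]

lemma wp_step (r : ℕ) (z : ℤ × ℤ) :
    wp r (z.1 - z.2, z.1 + z.2) = wp r z + wp (r+1) z := by
  rcases (show r % 4 = 0 ∨ r % 4 = 1 ∨ r % 4 = 2 ∨ r % 4 = 3 by omega) with h|h|h|h
  · have h1 : (r+1) % 4 = 1 := by omega
    simp [wp, h, h1] <;> ring
  · have h1 : (r+1) % 4 = 2 := by omega
    simp [wp, h, h1] <;> ring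
  · have h1 : (r+1) % 4 = 3 := by omega
    simp [wp, h, h1] <;> ring
  · have h1 : (r+1) % 4 = 0 := by omega
    simp [wp, h, h1] <;> ring

lemma Sv_succ (N M r : ℕ) : Sv N (M+1) r = Sv N M r + Sv N M (r+1) := by
  unfold Sv
  rw [← Finset.sum_add_distrib]
  refine Finset.sum_congr rfl fun j _ => ?_
  by_cases h1 : r + 1 ≤ 4 * j + 2
  · have h0 : r ≤ 4 * j + 2 := by omega
    have hk : 4 * j + 2 - r = (4 * j + 2 - (r+1)) + 1 := by omega
    simp only [if_pos h0, if_pos h1, hk, Nat.choose_succ_succ]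
    push_cast; ring
  · by_cases h0 : r ≤ 4 * j + 2
    · have he : 4 * j + 2 - r = 0 := by omega
      simp [h0, h1, he]
    · simp [h0, h1]

lemma Sv_zero (N r : ℕ) (hr : r ≤ 4 * N + 2) :
    Sv N 0 r = if r % 4 = 2 then 1 else 0 := by
  unfold Sv
  have hterm : ∀ j, (if r ≤ 4 * j + 2 then ((Nat.choose 0 (4 * j + 2 - r)) : ℤ) else 0)
      = if 4 * j + 2 = r then 1 else 0 := by
    intro j
    by_cases h0 : r ≤ 4 * j + 2
    · by_cases he : 4 * j + 2 = r
      · simp [h0, he]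
      · have : 0 < 4 * j + 2 - r := by omega
        rw [if_pos h0, if_neg he, Nat.choose_eq_zero_of_lt this]
        simp
    · rw [if_neg h0, if_neg (by omega)]
  simp only [hterm]
  by_cases h2 : r % 4 = 2
  · have hcond : ∀ j, (4 * j + 2 = r) ↔ j = (r - 2) / 4 := by intro j; omega
    simp only [hcond]
    rw [Finset.sum_ite_eq' (Finset.range (N+1)) ((r-2)/4) (fun _ => (1:ℤ))]
    rw [if_pos (Finset.mem_range.mpr (by omega)), if_pos h2]
  · rw [if_neg h2]
    refine Finset.sum_eq_zero fun j _ => if_neg (by omega)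

lemma Sv_closed (N : ℕ) : ∀ M r, r + M ≤ 4 * N + 2 →
    4 * Sv N M r = 2^M + (if M = 0 then (-1:ℤ)^r else 0) + 2 * wp r (g2 M) := by
  intro M
  induction M with
  | zero =>
    intro r hr
    rw [Sv_zero N r (by omega), neg_one_pow_ite]
    have h2 : r % 2 = r % 4 % 2 := by omega
    rcases (show r % 4 = 0 ∨ r % 4 = 1 ∨ r % 4 = 2 ∨ r % 4 = 3 by omega) with h|h|h|h <;>
      norm_num [wp, h, g2, h2]
  | succ M ih =>
    intro r hr
    rw [Sv_succ, mul_add, ih r (by omega), ih (r+1) (by omega)]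
    have hg : g2 (M+1) = ((g2 M).1 - (g2 M).2, (g2 M).1 + (g2 M).2) := rfl
    rw [hg, wp_step]
    by_cases hM : M = 0
    · subst hM
      rw [neg_one_pow_ite, neg_one_pow_ite]
      rcases (show r % 2 = 0 ∨ r % 2 = 1 by omega) with h|h <;>
        have h1 : (r+1) % 2 = 1 - r % 2 := by omega
      all_goals simp [h, h1]; ring
    · simp [hM, pow_succ]; ring

/-- `p2 M i` represents `(1+I)^M * (1-I)^i`. -/
def p2 (M : ℕ) : ℕ → ℤ × ℤ
  | 0 => g2 M
  | i+1 => ((p2 M i).1 + (p2 M i).2, (p2 M i).2 - (p2 M i).1)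

lemma alt_choose_step (i : ℕ) (f : ℕ → ℤ) :
    ∑ r ∈ Finset.range (i+2), (-1:ℤ)^r * ((i+1).choose r) * f r
    = ∑ r ∈ Finset.range (i+1), (-1:ℤ)^r * (i.choose r) * f r
      - ∑ r ∈ Finset.range (i+1), (-1:ℤ)^r * (i.choose r) * f (r+1) := by
  rw [Finset.sum_range_succ' (fun r => (-1:ℤ)^r * ((i+1).choose r) * f r) (i+1)]
  have hsplit : ∀ r, (-1:ℤ)^(r+1) * ((i+1).choose (r+1)) * f (r+1)
      = (-1:ℤ)^(r+1) * (i.choose r) * f (r+1) + (-1:ℤ)^(r+1) * (i.choose (r+1)) * f (r+1) := by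
    intro r
    rw [Nat.choose_succ_succ]
    push_cast; ring
  simp only [hsplit]
  rw [Finset.sum_add_distrib]
  have h2 : ∑ r ∈ Finset.range (i+1), (-1:ℤ)^(r+1) * (i.choose (r+1)) * f (r+1)
      + (-1:ℤ)^0 * (i.choose 0) * f 0
      = ∑ r ∈ Finset.range (i+2), (-1:ℤ)^r * (i.choose r) * f r := by
    rw [Finset.sum_range_succ' (fun r => (-1:ℤ)^r * (i.choose r) * f r) (i+1)]
  have h3 : ∑ r ∈ Finset.range (i+2), (-1:ℤ)^r * (i.choose r) * f r
      = ∑ r ∈ Finset.range (i+1), (-1:ℤ)^r * (i.choose r) * f r := by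
    rw [Finset.sum_range_succ, Nat.choose_succ_self]
    simp
  have h4 : ∑ r ∈ Finset.range (i+1), (-1:ℤ)^(r+1) * (i.choose r) * f (r+1)
      = - ∑ r ∈ Finset.range (i+1), (-1:ℤ)^r * (i.choose r) * f (r+1) := by
    rw [← Finset.sum_neg_distrib]
    refine Finset.sum_congr rfl fun r _ => by ring
  rw [h4]
  simp only [pow_zero, Nat.choose_zero_right, Nat.cast_one, mul_one, one_mul] at h2 ⊢
  omega

lemma wp_sub (t : ℕ) (q : ℤ × ℤ) :
    wp t q - wp (t+1) q = wp t (q.1 + q.2, q.2 - q.1) := by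
  rcases (show t % 4 = 0 ∨ t % 4 = 1 ∨ t % 4 = 2 ∨ t % 4 = 3 by omega) with h|h|h|h
  · have h1 : (t+1) % 4 = 1 := by omega
    simp [wp, h, h1] <;> ring
  · have h1 : (t+1) % 4 = 2 := by omega
    simp [wp, h, h1] <;> ring
  · have h1 : (t+1) % 4 = 3 := by omega
    simp [wp, h, h1] <;> ring
  · have h1 : (t+1) % 4 = 0 := by omega
    simp [wp, h, h1] <;> ring

lemma V_closed (M : ℕ) : ∀ i t,
    ∑ r ∈ Finset.range (i+1), (-1:ℤ)^r * (i.choose r) * wp (r+t) (g2 M) = wp t (p2 M i) := by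
  intro i
  induction i with
  | zero => intro t; simp [p2]
  | succ i ih =>
    intro t
    rw [show i + 1 + 1 = i + 2 from rfl,
      alt_choose_step i (fun r => wp (r+t) (g2 M))]
    have hshift : ∑ r ∈ Finset.range (i+1), (-1:ℤ)^r * (i.choose r) * wp (r+1+t) (g2 M)
        = ∑ r ∈ Finset.range (i+1), (-1:ℤ)^r * (i.choose r) * wp (r+(t+1)) (g2 M) := by
      refine Finset.sum_congr rfl fun r _ => by rw [show r+1+t = r+(t+1) by omega]
    rw [hshift, ih t, ih (t+1)]
    exact wp_sub t (p2 M i)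

lemma p2_closed (M : ℕ) : ∀ i, i ≤ M →
    p2 M i = (2^i * (g2 (M-i)).1, 2^i * (g2 (M-i)).2) := by
  intro i
  induction i with
  | zero => intro _; simp [p2]
  | succ i ih =>
    intro hi
    have hM : M - i = (M - (i+1)) + 1 := by omega
    have := ih (by omega)
    rw [p2, this, hM]
    have hg : g2 ((M - (i+1)) + 1)
        = ((g2 (M-(i+1))).1 - (g2 (M-(i+1))).2, (g2 (M-(i+1))).1 + (g2 (M-(i+1))).2) := rfl
    rw [hg]
    simp only [Prod.mk.injEq]
    constructor <;> ring

lemma g2_add_four (m : ℕ) : g2 (m+4) = (-4 * (g2 m).1, -4 * (g2 m).2) := by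
  show g2 (m+1+1+1+1) = _
  simp only [g2, Prod.mk.injEq]
  constructor <;> ring

lemma g2_odd (q : ℕ) : (g2 (2*q+1)).1
    = (if q % 4 = 0 ∨ q % 4 = 3 then 1 else -1) * 2^q := by
  induction q using Nat.strong_induction_on with
  | _ q ih =>
    rcases (show q = 0 ∨ q = 1 ∨ q = 2 ∨ q = 3 ∨ 4 ≤ q by omega) with h|h|h|h|h
    · subst h; decide
    · subst h; decide
    · subst h; decide
    · subst h; decide
    · obtain ⟨k, rfl⟩ : ∃ k, q = k + 4 := ⟨q-4, by omega⟩
      have hq : 2*(k+4)+1 = (2*k+1) + 4 + 4 := by omega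
      rw [hq, g2_add_four, g2_add_four]
      have := ih k (by omega)
      simp only [this]
      have hc : (k % 4 = 0 ∨ k % 4 = 3) ↔ ((k+4) % 4 = 0 ∨ (k+4) % 4 = 3) := by omega
      have hp : (2:ℤ)^(k+4) = 16 * 2^k := by rw [pow_add]; ring
      by_cases hcc : (k+4) % 4 = 0 ∨ (k+4) % 4 = 3
      · rw [if_pos hcc, if_pos (hc.mpr hcc), hp]; ring
      · rw [if_neg hcc, if_neg (fun hh => hcc (hc.mp hh)), hp]; ring

lemma neg_one_pow_ite_real (r : ℕ) : (-1:ℝ)^r = if r % 2 = 0 then 1 else -1 := by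
  rcases Nat.even_or_odd r with he | ho
  · rw [he.neg_one_pow, if_pos (Nat.even_iff.mp he)]
  · rw [ho.neg_one_pow, if_neg (by simp [Nat.odd_iff.mp ho])]

lemma alpha'_closed (N : ℕ) (hN3 : 3 ≤ N) (hodd : Odd N) (i : ℕ) (hi : i ≤ (N - 1) / 2) :
    alpha' N i = -(if ((N-1)/2 - i) % 4 = 0 ∨ ((N-1)/2 - i) % 4 = 3 then 1 else -1)
      * 2 ^ ((N - 3) / 2) := by
  have halpha : alpha N i = ∑ r ∈ Finset.range (i+1), (-1:ℤ)^r * (i.choose r) * Sv N (N-i) r :=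
    rfl
  have hNi : N - i ≠ 0 := by omega
  have key : 4 * alpha N i
      = (if i = 0 then (2:ℤ)^N else 0) - 2 * (2^i * (g2 (N - 2*i)).1) := by
    rw [halpha, Finset.mul_sum]
    have hterm : ∀ r ∈ Finset.range (i+1),
        4 * ((-1:ℤ)^r * (i.choose r) * Sv N (N-i) r)
        = (-1:ℤ)^r * (i.choose r) * 2^(N-i)
          + 2 * ((-1:ℤ)^r * (i.choose r) * wp (r+0) (g2 (N-i))) := by
      intro r hr
      have hb : r + (N - i) ≤ 4 * N + 2 := by
        have := Finset.mem_range.mp hr; omega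
      have := Sv_closed N (N-i) r hb
      rw [if_neg hNi] at this
      have h4 : 4 * ((-1:ℤ)^r * (i.choose r) * Sv N (N-i) r)
          = (-1:ℤ)^r * (i.choose r) * (4 * Sv N (N-i) r) := by ring
      rw [h4, this, Nat.add_zero]
      ring
    rw [Finset.sum_congr rfl hterm, Finset.sum_add_distrib]
    have h1 : ∑ r ∈ Finset.range (i+1), (-1:ℤ)^r * (i.choose r) * 2^(N-i)
        = (if i = 0 then (2:ℤ)^N else 0) := by
      rw [← Finset.sum_mul, Int.alternating_sum_range_choose]
      by_cases h0 : i = 0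
      · subst h0; simp
      · simp [h0]
    have h2 : ∑ r ∈ Finset.range (i+1),
          2 * ((-1:ℤ)^r * (i.choose r) * wp (r+0) (g2 (N-i)))
        = 2 * wp 0 (p2 (N-i) i) := by
      rw [← Finset.mul_sum, V_closed (N-i) i 0]
    rw [h1, h2, p2_closed (N-i) i (by omega), show (N-i) - i = N - 2*i by omega]
    simp [wp]
    ring
  have hodd2 : N % 2 = 1 := Nat.odd_iff.mp hodd
  have hq : N - 2*i = 2 * ((N-1)/2 - i) + 1 := by omega
  set q := (N-1)/2 - i with hqdef
  rw [hq, g2_odd q] at key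
  have hexp : (N-3)/2 + 2 = q + i + 1 := by omega
  apply mul_left_cancel₀ (show (4:ℤ) ≠ 0 by norm_num)
  have h4e : (4:ℤ) * (-(if q % 4 = 0 ∨ q % 4 = 3 then (1:ℤ) else -1) * 2 ^ ((N - 3) / 2))
      = -(if q % 4 = 0 ∨ q % 4 = 3 then (1:ℤ) else -1) * 2 ^ ((N-3)/2 + 2) := by
    rw [pow_add]; ring
  rw [h4e, hexp]
  unfold alpha'
  by_cases h0 : i = 0
  · subst h0
    rw [if_pos rfl, mul_sub, key, if_pos rfl]
    have hN2 : (4:ℤ) * 2^(N-2) = 2^N := by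
      rw [show N = (N-2)+2 by omega, show (N-2)+2-2 = N-2 by omega, pow_add]; ring
    rw [hN2, pow_add]
    ring
  · rw [if_neg h0, key, if_neg h0, pow_add]
    ring

lemma hN_eval (N : ℕ) (hodd : Odd N) :
    hN N = if N % 8 = 3 ∨ N % 8 = 5 then 1 else -1 := by
  have h2 : Real.sqrt 2 * Real.sqrt 2 = 2 := Real.mul_self_sqrt (by norm_num)
  have hsplit : N = 8 * (N / 8) + N % 8 := by omega
  have harg : Real.pi * (N + 4) / 4
      = Real.pi * ((N % 8 : ℕ) + 4) / 4 + (N / 8 : ℕ) * (2 * Real.pi) := by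
    nth_rewrite 1 [hsplit]
    push_cast
    ring
  unfold hN
  rw [harg, Real.cos_add_nat_mul_two_pi]
  have h8 : N % 8 = 1 ∨ N % 8 = 3 ∨ N % 8 = 5 ∨ N % 8 = 7 := by
    rcases hodd with ⟨k, hk⟩; omega
  rcases h8 with h|h|h|h <;> rw [h]
  · rw [show Real.pi * ((1:ℕ) + 4) / 4 = Real.pi / 4 + Real.pi by push_cast; ring,
      Real.cos_add_pi, Real.cos_pi_div_four]
    rw [if_neg (by omega)]
    linear_combination -h2 / 2
  · rw [show Real.pi * ((3:ℕ) + 4) / 4 = (Real.pi - Real.pi/4) + Real.pi by push_cast; ring,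
      Real.cos_add_pi, Real.cos_pi_sub, Real.cos_pi_div_four]
    rw [if_pos (by omega)]
    linear_combination h2 / 2
  · rw [show Real.pi * ((5:ℕ) + 4) / 4 = Real.pi / 4 + 2 * Real.pi by push_cast; ring,
      Real.cos_add_two_pi, Real.cos_pi_div_four]
    rw [if_pos (by omega)]
    linear_combination h2 / 2
  · rw [show Real.pi * ((7:ℕ) + 4) / 4 = (Real.pi - Real.pi/4) + 2 * Real.pi by push_cast; ring,
      Real.cos_add_two_pi, Real.cos_pi_sub, Real.cos_pi_div_four]
    rw [if_neg (by omega)]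
    linear_combination -h2 / 2

/-- The coefficient vectors `(β_i)` and `(h_N·α_i')` are proportional, with
proportionality constant `2^{(N-3)/2}`:  `β_i = 2^{-(N-3)/2}·h_N·α_i'`. -/
theorem beta_proportional_alpha' (N : ℕ) (hN3 : 3 ≤ N) (hodd : Odd N) :
    ∀ i : ℕ, i ≤ (N - 1) / 2 →
      beta N i = (2 : ℝ) ^ (-(((N - 3) / 2 : ℕ) : ℤ)) * (hN N * (alpha' N i : ℝ)) := by
  intro i hi
  have ha := alpha'_closed N hN3 hodd i hi
  have haR : ((alpha' N i : ℤ) : ℝ)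
      = -(if ((N-1)/2 - i) % 4 = 0 ∨ ((N-1)/2 - i) % 4 = 3 then (1:ℝ) else -1)
        * 2 ^ ((N - 3) / 2) := by
    rw [ha]
    push_cast [apply_ite (fun z : ℤ => (z : ℝ))]
    ring
  rw [haR, hN_eval N hodd]
  have hcancel : (2:ℝ) ^ (-(((N - 3) / 2 : ℕ) : ℤ)) * (2:ℝ) ^ ((N-3)/2 : ℕ) = 1 := by
    rw [← zpow_natCast (2:ℝ) ((N-3)/2), ← zpow_add₀ (by norm_num : (2:ℝ) ≠ 0)]
    simp
  have hgoal : (2 : ℝ) ^ (-(((N - 3) / 2 : ℕ) : ℤ)) *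
      ((if N % 8 = 3 ∨ N % 8 = 5 then (1:ℝ) else -1) *
        (-(if ((N-1)/2 - i) % 4 = 0 ∨ ((N-1)/2 - i) % 4 = 3 then (1:ℝ) else -1)
          * 2 ^ ((N - 3) / 2)))
      = -((if N % 8 = 3 ∨ N % 8 = 5 then (1:ℝ) else -1) *
          (if ((N-1)/2 - i) % 4 = 0 ∨ ((N-1)/2 - i) % 4 = 3 then (1:ℝ) else -1)) := by
    calc _ = ((2:ℝ) ^ (-(((N - 3) / 2 : ℕ) : ℤ)) * (2:ℝ) ^ ((N-3)/2 : ℕ)) *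
        (-((if N % 8 = 3 ∨ N % 8 = 5 then (1:ℝ) else -1) *
          (if ((N-1)/2 - i) % 4 = 0 ∨ ((N-1)/2 - i) % 4 = 3 then (1:ℝ) else -1))) := by ring
    _ = _ := by rw [hcancel]; ring
  refine Eq.trans ?_ hgoal.symm
  unfold beta
  simp only [Nat.odd_iff, neg_one_pow_ite_real ((N - i)/2), neg_one_pow_ite_real (i/2)]
  have h8 : N % 8 = 1 ∨ N % 8 = 3 ∨ N % 8 = 5 ∨ N % 8 = 7 := by
    rcases hodd with ⟨k, hk⟩; omega
  have hN2 : N % 2 = 1 := by omega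
  rcases h8 with h|h|h|h <;>
    split_ifs <;> first | (exfalso; omega) | norm_num
end
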